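/- For all a, b, c ∈ ℤ, R_H(a,b,c) = { -(m+n-1)·a + m·b + n·c + m² + n² + mn - m - n : m, n ∈ ℤ }. -/

import Mathlib

def H1 : ℤ × ℤ × ℤ → ℤ × ℤ × ℤ := fun t => (-t.1 + 1 + t.2.1 + t.2.2, t.2.1, t.2.2)
def H2 : ℤ × ℤ × ℤ → ℤ × ℤ × ℤ := fun t => (t.1, -t.2.1 + 1 + t.2.2 + t.1, t.2.2)
def H3 : ℤ × ℤ × ℤ → ℤ × ℤ × ℤ := fun t => (t.1, t.2.1, -t.2.2 + 1 + t.1 + t.2.1)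

/-- One step of the dynamics: apply one of `H1`, `H2`, `H3`. -/
def HStep (s t : ℤ × ℤ × ℤ) : Prop := t = H1 s ∨ t = H2 s ∨ t = H3 s

/-- The set of triples reachable from `(a,b,c)` by finitely many applications
of `H1`, `H2`, `H3` in any order. -/
def TH (a b c : ℤ) : Set (ℤ × ℤ × ℤ) := {t | Relation.ReflTransGen HStep (a, b, c) t}

/-- The set of integers represented as a component of a triple in `TH a b c`. -/
def RH (a b c : ℤ) : Set ℤ :=
  {r | ∃ t ∈ TH a b c, r = t.1 ∨ r = t.2.1 ∨ r = t.2.2}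


def F (a b c m n : ℤ) : ℤ :=
  -(m + n - 1) * a + m * b + n * c + m ^ 2 + n ^ 2 + m * n - m - n

def W (a b c p q : ℤ) : Prop :=
  (F a b c p q, F a b c (p + 1) q, F a b c p (q + 1)) ∈ TH a b c ∨
  (F a b c (p + 1) q, F a b c p (q + 1), F a b c p q) ∈ TH a b c ∨
  (F a b c p (q + 1), F a b c p q, F a b c (p + 1) q) ∈ TH a b c

def Good (a b c : ℤ) (t : ℤ × ℤ × ℤ) : Prop :=
  ∃ p q r s u v : ℤ, t = (F a b c p q, F a b c r s, F a b c u v) ∧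
    (r - p) ^ 2 + (s - q) ^ 2 + (r - p) * (s - q) = 1 ∧
    (u - p) ^ 2 + (v - q) ^ 2 + (u - p) * (v - q) = 1 ∧
    2 * ((r - p) * (u - p) + (s - q) * (v - q)) + ((r - p) * (v - q) + (u - p) * (s - q)) = 1

lemma good_step {a b c : ℤ} {t t' : ℤ × ℤ × ℤ} (hg : Good a b c t) (hs : HStep t t') :
    Good a b c t' := by
  obtain ⟨p, q, r, s, u, v, rfl, h1, h2, h3⟩ := hg
  rcases hs with rfl | rfl | rfl
  · refine ⟨r + u - p, s + v - q, r, s, u, v, ?_, by linear_combination h2, by linear_combination h1, ?_⟩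
    · simp only [H1, Prod.mk.injEq, and_true, true_and]
      unfold F
      linear_combination -h3
    · linear_combination h3
  · refine ⟨p, q, p + u - r, q + v - s, u, v, ?_, ?_, h2, ?_⟩
    · simp only [H2, Prod.mk.injEq, and_true, true_and]
      unfold F
      linear_combination h3 - 2 * h1
    · linear_combination h1 + h2 - h3
    · linear_combination 2 * h2 - h3
  · refine ⟨p, q, r, s, p + r - u, q + s - v, ?_, h1, ?_, ?_⟩
    · simp only [H3, Prod.mk.injEq, and_true, true_and]
      unfold F
      linear_combination h3 - 2 * h2
    · linear_combination h1 + h2 - h3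
    · linear_combination 2 * h1 - h3

lemma good_of_mem {a b c : ℤ} {t : ℤ × ℤ × ℤ} (h : t ∈ TH a b c) : Good a b c t := by
  induction h with
  | refl =>
    refine ⟨0, 0, 1, 0, 0, 1, ?_, by ring, by ring, by ring⟩
    simp only [Prod.mk.injEq]
    refine ⟨?_, ?_, ?_⟩ <;> first | trivial | (unfold F; ring)
  | tail _ hstep ih => exact good_step ih hstep

lemma W_right (a b c p q : ℤ) (h : W a b c p q) : W a b c (p + 1) q := by
  rcases h with h | h | h
  · have h0 : (F a b c p q, F a b c (p + 1) q, F a b c p (q + 1)) ∈ TH a b c := h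
    have h1 : (F a b c (p + 1) (q + 1), F a b c (p + 1) q, F a b c p (q + 1)) ∈ TH a b c := Relation.ReflTransGen.tail h0 (Or.inl ((by simp only [H1, Prod.mk.injEq, and_true, true_and]; unfold F; ring : (F a b c (p + 1) (q + 1), F a b c (p + 1) q, F a b c p (q + 1)) = H1 (F a b c p q, F a b c (p + 1) q, F a b c p (q + 1)))))
    have h2 : (F a b c (p + 1) (q + 1), F a b c (p + 1) q, F a b c (p + 2) q) ∈ TH a b c := Relation.ReflTransGen.tail h1 (Or.inr (Or.inr ((by simp only [H3, Prod.mk.injEq, and_true, true_and]; unfold F; ring : (F a b c (p + 1) (q + 1), F a b c (p + 1) q, F a b c (p + 2) q) = H3 (F a b c (p + 1) (q + 1), F a b c (p + 1) q, F a b c p (q + 1))))))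
    refine Or.inr (Or.inr ?_)
    convert h2 using 2 <;> unfold F <;> ring
  · have h0 : (F a b c (p + 1) q, F a b c p (q + 1), F a b c p q) ∈ TH a b c := h
    have h1 : (F a b c (p + 1) q, F a b c p (q + 1), F a b c (p + 1) (q + 1)) ∈ TH a b c := Relation.ReflTransGen.tail h0 (Or.inr (Or.inr ((by simp only [H3, Prod.mk.injEq, and_true, true_and]; unfold F; ring : (F a b c (p + 1) q, F a b c p (q + 1), F a b c (p + 1) (q + 1)) = H3 (F a b c (p + 1) q, F a b c p (q + 1), F a b c p q)))))
    have h2 : (F a b c (p + 1) q, F a b c (p + 2) q, F a b c (p + 1) (q + 1)) ∈ TH a b c := Relation.ReflTransGen.tail h1 (Or.inr (Or.inl ((by simp only [H2, Prod.mk.injEq, and_true, true_and]; unfold F; ring : (F a b c (p + 1) q, F a b c (p + 2) q, F a b c (p + 1) (q + 1)) = H2 (F a b c (p + 1) q, F a b c p (q + 1), F a b c (p + 1) (q + 1))))))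
    refine Or.inl ?_
    convert h2 using 2 <;> unfold F <;> ring
  · have h0 : (F a b c p (q + 1), F a b c p q, F a b c (p + 1) q) ∈ TH a b c := h
    have h1 : (F a b c p (q + 1), F a b c (p + 1) (q + 1), F a b c (p + 1) q) ∈ TH a b c := Relation.ReflTransGen.tail h0 (Or.inr (Or.inl ((by simp only [H2, Prod.mk.injEq, and_true, true_and]; unfold F; ring : (F a b c p (q + 1), F a b c (p + 1) (q + 1), F a b c (p + 1) q) = H2 (F a b c p (q + 1), F a b c p q, F a b c (p + 1) q)))))
    have h2 : (F a b c (p + 2) q, F a b c (p + 1) (q + 1), F a b c (p + 1) q) ∈ TH a b c := Relation.ReflTransGen.tail h1 (Or.inl ((by simp only [H1, Prod.mk.injEq, and_true, true_and]; unfold F; ring : (F a b c (p + 2) q, F a b c (p + 1) (q + 1), F a b c (p + 1) q) = H1 (F a b c p (q + 1), F a b c (p + 1) (q + 1), F a b c (p + 1) q))))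
    refine Or.inr (Or.inl ?_)
    convert h2 using 2 <;> unfold F <;> ring

lemma W_left (a b c p q : ℤ) (h : W a b c p q) : W a b c (p - 1) q := by
  rcases h with h | h | h
  · have h0 : (F a b c p q, F a b c (p + 1) q, F a b c p (q + 1)) ∈ TH a b c := h
    have h1 : (F a b c p q, F a b c (p - 1) (q + 1), F a b c p (q + 1)) ∈ TH a b c := Relation.ReflTransGen.tail h0 (Or.inr (Or.inl ((by simp only [H2, Prod.mk.injEq, and_true, true_and]; unfold F; ring : (F a b c p q, F a b c (p - 1) (q + 1), F a b c p (q + 1)) = H2 (F a b c p q, F a b c (p + 1) q, F a b c p (q + 1))))))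
    have h2 : (F a b c p q, F a b c (p - 1) (q + 1), F a b c (p - 1) q) ∈ TH a b c := Relation.ReflTransGen.tail h1 (Or.inr (Or.inr ((by simp only [H3, Prod.mk.injEq, and_true, true_and]; unfold F; ring : (F a b c p q, F a b c (p - 1) (q + 1), F a b c (p - 1) q) = H3 (F a b c p q, F a b c (p - 1) (q + 1), F a b c p (q + 1))))))
    refine Or.inr (Or.inl ?_)
    convert h2 using 2 <;> unfold F <;> ring
  · have h0 : (F a b c (p + 1) q, F a b c p (q + 1), F a b c p q) ∈ TH a b c := h
    have h1 : (F a b c (p - 1) (q + 1), F a b c p (q + 1), F a b c p q) ∈ TH a b c := Relation.ReflTransGen.tail h0 (Or.inl ((by simp only [H1, Prod.mk.injEq, and_true, true_and]; unfold F; ring : (F a b c (p - 1) (q + 1), F a b c p (q + 1), F a b c p q) = H1 (F a b c (p + 1) q, F a b c p (q + 1), F a b c p q))))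
    have h2 : (F a b c (p - 1) (q + 1), F a b c (p - 1) q, F a b c p q) ∈ TH a b c := Relation.ReflTransGen.tail h1 (Or.inr (Or.inl ((by simp only [H2, Prod.mk.injEq, and_true, true_and]; unfold F; ring : (F a b c (p - 1) (q + 1), F a b c (p - 1) q, F a b c p q) = H2 (F a b c (p - 1) (q + 1), F a b c p (q + 1), F a b c p q)))))
    refine Or.inr (Or.inr ?_)
    convert h2 using 2 <;> unfold F <;> ring
  · have h0 : (F a b c p (q + 1), F a b c p q, F a b c (p + 1) q) ∈ TH a b c := h
    have h1 : (F a b c p (q + 1), F a b c p q, F a b c (p - 1) (q + 1)) ∈ TH a b c := Relation.ReflTransGen.tail h0 (Or.inr (Or.inr ((by simp only [H3, Prod.mk.injEq, and_true, true_and]; unfold F; ring : (F a b c p (q + 1), F a b c p q, F a b c (p - 1) (q + 1)) = H3 (F a b c p (q + 1), F a b c p q, F a b c (p + 1) q)))))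
    have h2 : (F a b c (p - 1) q, F a b c p q, F a b c (p - 1) (q + 1)) ∈ TH a b c := Relation.ReflTransGen.tail h1 (Or.inl ((by simp only [H1, Prod.mk.injEq, and_true, true_and]; unfold F; ring : (F a b c (p - 1) q, F a b c p q, F a b c (p - 1) (q + 1)) = H1 (F a b c p (q + 1), F a b c p q, F a b c (p - 1) (q + 1)))))
    refine Or.inl ?_
    convert h2 using 2 <;> unfold F <;> ring

lemma W_up (a b c p q : ℤ) (h : W a b c p q) : W a b c p (q + 1) := by
  rcases h with h | h | h
  · have h0 : (F a b c p q, F a b c (p + 1) q, F a b c p (q + 1)) ∈ TH a b c := h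
    have h1 : (F a b c (p + 1) (q + 1), F a b c (p + 1) q, F a b c p (q + 1)) ∈ TH a b c := Relation.ReflTransGen.tail h0 (Or.inl ((by simp only [H1, Prod.mk.injEq, and_true, true_and]; unfold F; ring : (F a b c (p + 1) (q + 1), F a b c (p + 1) q, F a b c p (q + 1)) = H1 (F a b c p q, F a b c (p + 1) q, F a b c p (q + 1)))))
    have h2 : (F a b c (p + 1) (q + 1), F a b c p (q + 2), F a b c p (q + 1)) ∈ TH a b c := Relation.ReflTransGen.tail h1 (Or.inr (Or.inl ((by simp only [H2, Prod.mk.injEq, and_true, true_and]; unfold F; ring : (F a b c (p + 1) (q + 1), F a b c p (q + 2), F a b c p (q + 1)) = H2 (F a b c (p + 1) (q + 1), F a b c (p + 1) q, F a b c p (q + 1))))))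
    refine Or.inr (Or.inl ?_)
    convert h2 using 2 <;> unfold F <;> ring
  · have h0 : (F a b c (p + 1) q, F a b c p (q + 1), F a b c p q) ∈ TH a b c := h
    have h1 : (F a b c (p + 1) q, F a b c p (q + 1), F a b c (p + 1) (q + 1)) ∈ TH a b c := Relation.ReflTransGen.tail h0 (Or.inr (Or.inr ((by simp only [H3, Prod.mk.injEq, and_true, true_and]; unfold F; ring : (F a b c (p + 1) q, F a b c p (q + 1), F a b c (p + 1) (q + 1)) = H3 (F a b c (p + 1) q, F a b c p (q + 1), F a b c p q)))))
    have h2 : (F a b c p (q + 2), F a b c p (q + 1), F a b c (p + 1) (q + 1)) ∈ TH a b c := Relation.ReflTransGen.tail h1 (Or.inl ((by simp only [H1, Prod.mk.injEq, and_true, true_and]; unfold F; ring : (F a b c p (q + 2), F a b c p (q + 1), F a b c (p + 1) (q + 1)) = H1 (F a b c (p + 1) q, F a b c p (q + 1), F a b c (p + 1) (q + 1)))))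
    refine Or.inr (Or.inr ?_)
    convert h2 using 2 <;> unfold F <;> ring
  · have h0 : (F a b c p (q + 1), F a b c p q, F a b c (p + 1) q) ∈ TH a b c := h
    have h1 : (F a b c p (q + 1), F a b c (p + 1) (q + 1), F a b c (p + 1) q) ∈ TH a b c := Relation.ReflTransGen.tail h0 (Or.inr (Or.inl ((by simp only [H2, Prod.mk.injEq, and_true, true_and]; unfold F; ring : (F a b c p (q + 1), F a b c (p + 1) (q + 1), F a b c (p + 1) q) = H2 (F a b c p (q + 1), F a b c p q, F a b c (p + 1) q)))))
    have h2 : (F a b c p (q + 1), F a b c (p + 1) (q + 1), F a b c p (q + 2)) ∈ TH a b c := Relation.ReflTransGen.tail h1 (Or.inr (Or.inr ((by simp only [H3, Prod.mk.injEq, and_true, true_and]; unfold F; ring : (F a b c p (q + 1), F a b c (p + 1) (q + 1), F a b c p (q + 2)) = H3 (F a b c p (q + 1), F a b c (p + 1) (q + 1), F a b c (p + 1) q)))))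
    refine Or.inl ?_
    convert h2 using 2 <;> unfold F <;> ring

lemma W_down (a b c p q : ℤ) (h : W a b c p q) : W a b c p (q - 1) := by
  rcases h with h | h | h
  · have h0 : (F a b c p q, F a b c (p + 1) q, F a b c p (q + 1)) ∈ TH a b c := h
    have h1 : (F a b c p q, F a b c (p + 1) q, F a b c (p + 1) (q - 1)) ∈ TH a b c := Relation.ReflTransGen.tail h0 (Or.inr (Or.inr ((by simp only [H3, Prod.mk.injEq, and_true, true_and]; unfold F; ring : (F a b c p q, F a b c (p + 1) q, F a b c (p + 1) (q - 1)) = H3 (F a b c p q, F a b c (p + 1) q, F a b c p (q + 1))))))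
    have h2 : (F a b c p q, F a b c p (q - 1), F a b c (p + 1) (q - 1)) ∈ TH a b c := Relation.ReflTransGen.tail h1 (Or.inr (Or.inl ((by simp only [H2, Prod.mk.injEq, and_true, true_and]; unfold F; ring : (F a b c p q, F a b c p (q - 1), F a b c (p + 1) (q - 1)) = H2 (F a b c p q, F a b c (p + 1) q, F a b c (p + 1) (q - 1))))))
    refine Or.inr (Or.inr ?_)
    convert h2 using 2 <;> unfold F <;> ring
  · have h0 : (F a b c (p + 1) q, F a b c p (q + 1), F a b c p q) ∈ TH a b c := h
    have h1 : (F a b c (p + 1) q, F a b c (p + 1) (q - 1), F a b c p q) ∈ TH a b c := Relation.ReflTransGen.tail h0 (Or.inr (Or.inl ((by simp only [H2, Prod.mk.injEq, and_true, true_and]; unfold F; ring : (F a b c (p + 1) q, F a b c (p + 1) (q - 1), F a b c p q) = H2 (F a b c (p + 1) q, F a b c p (q + 1), F a b c p q)))))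
    have h2 : (F a b c p (q - 1), F a b c (p + 1) (q - 1), F a b c p q) ∈ TH a b c := Relation.ReflTransGen.tail h1 (Or.inl ((by simp only [H1, Prod.mk.injEq, and_true, true_and]; unfold F; ring : (F a b c p (q - 1), F a b c (p + 1) (q - 1), F a b c p q) = H1 (F a b c (p + 1) q, F a b c (p + 1) (q - 1), F a b c p q))))
    refine Or.inl ?_
    convert h2 using 2 <;> unfold F <;> ring
  · have h0 : (F a b c p (q + 1), F a b c p q, F a b c (p + 1) q) ∈ TH a b c := h
    have h1 : (F a b c (p + 1) (q - 1), F a b c p q, F a b c (p + 1) q) ∈ TH a b c := Relation.ReflTransGen.tail h0 (Or.inl ((by simp only [H1, Prod.mk.injEq, and_true, true_and]; unfold F; ring : (F a b c (p + 1) (q - 1), F a b c p q, F a b c (p + 1) q) = H1 (F a b c p (q + 1), F a b c p q, F a b c (p + 1) q))))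
    have h2 : (F a b c (p + 1) (q - 1), F a b c p q, F a b c p (q - 1)) ∈ TH a b c := Relation.ReflTransGen.tail h1 (Or.inr (Or.inr ((by simp only [H3, Prod.mk.injEq, and_true, true_and]; unfold F; ring : (F a b c (p + 1) (q - 1), F a b c p q, F a b c p (q - 1)) = H3 (F a b c (p + 1) (q - 1), F a b c p q, F a b c (p + 1) q)))))
    refine Or.inr (Or.inl ?_)
    convert h2 using 2 <;> unfold F <;> ring

lemma W_zero (a b c : ℤ) : W a b c 0 0 := by
  left
  have e : (F a b c 0 0, F a b c (0 + 1) 0, F a b c 0 (0 + 1)) = (a, b, c) := by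
    simp only [Prod.mk.injEq]
    refine ⟨?_, ?_, ?_⟩ <;> first | trivial | (unfold F; ring)
  rw [e]
  exact Relation.ReflTransGen.refl

lemma W_all (a b c p q : ℤ) : W a b c p q := by
  have hp : ∀ r : ℤ, W a b c r 0 := by
    intro r
    induction r using Int.induction_on with
    | zero => exact W_zero a b c
    | succ k ih => exact W_right a b c k 0 ih
    | pred k ih => exact W_left a b c (-k) 0 ih
  induction q using Int.induction_on with
  | zero => exact hp p
  | succ k ih => exact W_up a b c p k ih
  | pred k ih => exact W_down a b c p (-k) ih

theorem RH_parametrization (a b c : ℤ) :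
    RH a b c =
      {w : ℤ | ∃ m n : ℤ,
        w = -(m + n - 1) * a + m * b + n * c + m ^ 2 + n ^ 2 + m * n - m - n} := by
  ext w
  constructor
  · rintro ⟨t, ht, hw⟩
    obtain ⟨p, q, r, s, u, v, rfl, -, -, -⟩ := good_of_mem ht
    rcases hw with rfl | rfl | rfl
    · exact ⟨p, q, by unfold F; ring⟩
    · exact ⟨r, s, by unfold F; ring⟩
    · exact ⟨u, v, by unfold F; ring⟩
  · rintro ⟨m, n, rfl⟩
    rcases W_all a b c m n with h | h | h
    · exact ⟨_, h, Or.inl (by unfold F; ring)⟩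
    · exact ⟨_, h, Or.inr (Or.inr (by unfold F; ring))⟩
    · exact ⟨_, h, Or.inr (Or.inl (by unfold F; ring))⟩
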